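/- Let α ∈ (0,2) with α ≠ 1 and c > 0. Define p₀ : ℝ → ℝ by p₀(x) = 0 for x ≤ −1, p₀(x) = (x+1)/2 for −1 < x < 1, p₀(x) = 1 for x ≥ 1, and set g(x) = ∫_{ℝ\{0}} (p₀(x+u) − p₀(x) − 1_{|u|≤1}·(u/2))·c·|u|^{-(1+α)} du for x ∈ (−1,1). Define p₁ : [−1,1] → ℝ by p₁(x) = (c/((−α)(1−α)(2−α)(3−α)))·[(1−x)^{3−α} − 2^{3−α} + (3−α)·2^{2−α}·(x+1) − (1+x)^{3−α}] − ((x+1)/2)·(c/((−α)(2−α)(3−α)))·2^{3−α} + (x+1)/2. Then p₁(−1) = 0, p₁(1) = 1, p₁ is twice differentiable on (−1,1), and for every x ∈ (−1,1): (1/2)·p₁''(x) + g(x) = 0. -/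

import Mathlib

set_option maxHeartbeats 2000000
set_option linter.unusedVariables false
set_option linter.unreachableTactic false
set_option linter.unnecessarySeqFocus false
set_option linter.unusedTactic false

open MeasureTheory

section Aux
open Set


lemma rpow_split {u : ℝ} (hu : 0 < u) (α : ℝ) : u ^ (-α) = u * u ^ (-1-α) := by
  rw [show -α = 1 + (-1-α) by ring, Real.rpow_add hu, Real.rpow_one]

lemma helper_int (α : ℝ) (hα : 0 < α) (hα1 : α ≠ 1) {m M : ℝ} (hm : 0 < m) (hmM : m ≤ M) :
    ∫ u in Set.Ioi (0:ℝ), (if u ≤ m then 0 else if u ≤ M then m - u else m - M) * u ^ (-1-α)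
      = (m ^ (1-α) - M ^ (1-α)) / (α * (1-α)) := by
  have hM : 0 < M := lt_of_lt_of_le hm hmM
  have hr : (-1-α : ℝ) < -1 := by linarith
  set f : ℝ → ℝ := fun u => (if u ≤ m then 0 else if u ≤ M then m - u else m - M) * u ^ (-1-α)
    with hf
  have h1 : ∫ u in Set.Ioc (0:ℝ) m, f u = 0 := by
    rw [setIntegral_congr_fun measurableSet_Ioc (g := fun _ => (0:ℝ))
      (fun u hu => by simp [hf, hu.2])]
    simp
  have hcont : ContinuousOn (fun u : ℝ => (m - u) * u ^ (-1-α)) (Set.Icc m M) := by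
    refine ((continuous_const.sub continuous_id).continuousOn).mul
      (ContinuousOn.rpow_const continuousOn_id (fun u hu => Or.inl ?_))
    exact ne_of_gt (lt_of_lt_of_le hm hu.1)
  have heq2 : ∀ u ∈ Set.Ioc m M, f u = (m - u) * u ^ (-1-α) := by
    intro u hu
    simp only [hf]
    rw [if_neg (not_le.mpr hu.1), if_pos hu.2]
  have h2i : IntegrableOn f (Set.Ioc m M) := by
    refine (IntegrableOn.mono_set (hcont.integrableOn_Icc) Set.Ioc_subset_Icc_self).congr_fun
      (fun u hu => (heq2 u hu).symm) measurableSet_Ioc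
  have h3eq : ∀ u ∈ Set.Ioi M, f u = (m - M) * u ^ (-1-α) := by
    intro u hu
    simp only [hf]
    rw [if_neg (not_le.mpr (lt_of_le_of_lt hmM hu)), if_neg (not_le.mpr hu)]
  have h3i : IntegrableOn f (Set.Ioi M) := by
    refine IntegrableOn.congr_fun ((integrableOn_Ioi_rpow_of_lt hr hM).const_mul (m - M))
      (fun u hu => (h3eq u hu).symm) measurableSet_Ioi
  have h2 : ∫ u in Set.Ioc m M, f u
      = (m * M ^ (-α)/(-α) - M ^ (1-α)/(1-α)) - (m * m ^ (-α)/(-α) - m ^ (1-α)/(1-α)) := by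
    rw [setIntegral_congr_fun measurableSet_Ioc heq2, ← intervalIntegral.integral_of_le hmM]
    have key : ∀ u ∈ Set.uIcc m M, HasDerivAt (fun v : ℝ => m * v ^ (-α)/(-α) - v ^ (1-α)/(1-α))
        ((m - u) * u ^ (-1-α)) u := by
      intro u hu
      rw [Set.uIcc_of_le hmM] at hu
      have hu0 : 0 < u := lt_of_lt_of_le hm hu.1
      have d1 : HasDerivAt (fun v : ℝ => m * v ^ (-α)/(-α)) (m * u ^ (-1-α)) u := by
        have := ((Real.hasDerivAt_rpow_const (p := -α) (Or.inl hu0.ne')).const_mul m).div_const (-α)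
        refine this.congr_deriv ?_
        rw [show -α - 1 = -1-α by ring]
        field_simp
      have d2 : HasDerivAt (fun v : ℝ => v ^ (1-α)/(1-α)) (u ^ (-α)) u := by
        have := (Real.hasDerivAt_rpow_const (p := 1-α) (Or.inl hu0.ne')).div_const (1-α)
        refine this.congr_deriv ?_
        rw [show (1:ℝ)-α-1 = -α by ring]
        have h1α : (1:ℝ) - α ≠ 0 := by
          intro h; apply hα1; linarith
        field_simp
      refine (d1.sub d2).congr_deriv ?_
      rw [rpow_split hu0 α]; ring
    rw [intervalIntegral.integral_eq_sub_of_hasDerivAt key]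
    · exact (hcont.mono (by rw [Set.uIcc_of_le hmM])).intervalIntegrable
  have h3 : ∫ u in Set.Ioi M, f u = (m - M) * (-M ^ (-α) / (-α)) := by
    rw [setIntegral_congr_fun measurableSet_Ioi h3eq, integral_const_mul,
      integral_Ioi_rpow_of_lt hr hM, show (-1 - α + 1) = -α by ring]
  have hsplit : ∫ u in Set.Ioi (0:ℝ), f u
      = (∫ u in Set.Ioc (0:ℝ) m, f u) + ((∫ u in Set.Ioc m M, f u) + ∫ u in Set.Ioi M, f u) := by
    rw [← setIntegral_union (Set.Ioc_disjoint_Ioi le_rfl) measurableSet_Ioi h2i h3i,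
      Set.Ioc_union_Ioi_eq_Ioi hmM]
    have h1i : IntegrableOn f (Set.Ioc (0:ℝ) m) := by
      refine (integrableOn_zero).congr_fun (fun u hu => by simp [hf, hu.2]) measurableSet_Ioc
    have hIoim : IntegrableOn f (Set.Ioi m) := by
      rw [← Set.Ioc_union_Ioi_eq_Ioi hmM]; exact h2i.union h3i
    rw [← setIntegral_union (Set.Ioc_disjoint_Ioi le_rfl) measurableSet_Ioi h1i
      hIoim, Set.Ioc_union_Ioi_eq_Ioi hm.le]
  rw [hsplit, h1, h2, h3]
  have hmm : m ^ ((1:ℝ)-α) = m * m ^ (-α) := by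
    rw [show (1:ℝ)-α = 1 + (-α) by ring, Real.rpow_add hm, Real.rpow_one]
  have hMM : M ^ ((1:ℝ)-α) = M * M ^ (-α) := by
    rw [show (1:ℝ)-α = 1 + (-α) by ring, Real.rpow_add hM, Real.rpow_one]
  have h1α : (1:ℝ) - α ≠ 0 := by intro h; apply hα1; linarith
  rw [hmm, hMM]
  field_simp [hα.ne', h1α]
  ring

lemma g_eval (α c : ℝ) (hα : 0 < α) (hα2 : α < 2) (hα1 : α ≠ 1) (hc : 0 < c) (x : ℝ)
    (hx1 : -1 < x) (hx2 : x < 1) :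
    (∫ u in {(0:ℝ)}ᶜ,
        ((if x + u ≤ -1 then (0:ℝ) else if x + u < 1 then (x + u + 1) / 2 else 1)
          - (if x ≤ -1 then (0:ℝ) else if x < 1 then (x + 1) / 2 else 1)
          - (if |u| ≤ 1 then u / 2 else 0)) * (c * |u| ^ (-(1 + α))))
      = c / (2 * α * (1 - α)) * ((1 - x) ^ (1 - α) - (1 + x) ^ (1 - α)) := by
  have hrlt : (-1 - α : ℝ) < -1 := by linarith
  set P : ℝ → ℝ := fun y => if y ≤ -1 then 0 else if y < 1 then (y + 1) / 2 else 1 with hPdef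
  set F : ℝ → ℝ := fun u =>
    (P (x + u) - P x - (if |u| ≤ 1 then u / 2 else 0)) * (c * |u| ^ (-(1 + α))) with hFdef
  have hP : ∀ y : ℝ, -1 ≤ y → y ≤ 1 → P y = (y + 1) / 2 := by
    intro y h1 h2
    simp only [hPdef]
    split_ifs with h h'
    · have : y = -1 := le_antisymm h h1
      rw [this]; norm_num
    · rfl
    · have : y = 1 := le_antisymm h2 (not_lt.mp h')
      rw [this]; norm_num
  have hP0 : ∀ y : ℝ, y ≤ -1 → P y = 0 := fun y h => if_pos h
  have hP1 : ∀ y : ℝ, 1 ≤ y → P y = 1 := by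
    intro y h
    simp only [hPdef]
    rw [if_neg (by linarith), if_neg (not_lt.mpr h)]
  have hPx : P x = (x + 1) / 2 := hP x hx1.le hx2.le
  have hPb : ∀ y : ℝ, |P y| ≤ 1 := by
    intro y
    rw [abs_le]
    simp only [hPdef]
    constructor <;> split_ifs with h1 h2 <;> linarith
  have hPm : Measurable P := by
    apply Measurable.ite (measurableSet_le measurable_id measurable_const) measurable_const
    exact Measurable.ite (measurableSet_lt measurable_id measurable_const) (by fun_prop)
      measurable_const
  have hFm : Measurable F := by
    apply Measurable.mul _ (by fun_prop)
    apply Measurable.sub _ (Measurable.ite (measurableSet_le (by fun_prop) measurable_const)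
      (by fun_prop) measurable_const)
    exact (hPm.comp (by fun_prop)).sub measurable_const
  -- vanishing near 0
  set r : ℝ := min (min (1 - x) (1 + x)) 1 with hrdef
  have hr : 0 < r := by
    simp only [hrdef, lt_min_iff]
    refine ⟨⟨by linarith, by linarith⟩, one_pos⟩
  have hr1 : r ≤ 1 - x := le_trans (min_le_left _ _) (min_le_left _ _)
  have hr2 : r ≤ 1 + x := le_trans (min_le_left _ _) (min_le_right _ _)
  have hr3 : r ≤ 1 := min_le_right _ _
  have hF0 : ∀ u : ℝ, -r ≤ u → u ≤ r → F u = 0 := by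
    intro u h1 h2
    have habs : |u| ≤ 1 := abs_le.mpr ⟨by linarith, by linarith⟩
    have : P (x + u) = (x + u + 1) / 2 := hP _ (by linarith) (by linarith)
    simp only [hFdef]
    rw [this, hPx, if_pos habs]
    have : (x + u + 1) / 2 - (x + 1) / 2 - u / 2 = 0 := by ring
    rw [this, zero_mul]
  -- bound away from 0
  have hFbd : ∀ u : ℝ, u ≠ 0 → |F u| ≤ 3 * c * |u| ^ (-1 - α) := by
    intro u _
    have h1 := hPb (x + u)
    have h2 := hPb x
    have h3 : |(if |u| ≤ 1 then u / 2 else 0)| ≤ 1 := by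
      split_ifs with h
      · rw [abs_div, abs_two]; linarith
      · simp
    have hS : |P (x + u) - P x - (if |u| ≤ 1 then u / 2 else 0)| ≤ 3 := by
      rw [abs_le] at h1 h2 h3 ⊢
      constructor <;> linarith [h1.1, h1.2, h2.1, h2.2, h3.1, h3.2]
    have hw : (0:ℝ) ≤ c * |u| ^ (-(1 + α)) :=
      mul_nonneg hc.le (Real.rpow_nonneg (abs_nonneg u) _)
    calc |F u| = |P (x + u) - P x - (if |u| ≤ 1 then u / 2 else 0)| * (c * |u| ^ (-(1 + α))) := by
          rw [hFdef]; rw [abs_mul, abs_of_nonneg hw]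
      _ ≤ 3 * (c * |u| ^ (-(1 + α))) := by
          exact mul_le_mul_of_nonneg_right hS hw
      _ = 3 * c * |u| ^ (-1 - α) := by rw [show -(1 + α) = -1 - α by ring]; ring
  have A : MeasurableEmbedding (fun x : ℝ => -x) := (Homeomorph.neg ℝ).measurableEmbedding
  have hbndIoi : IntegrableOn (fun u : ℝ => 3 * c * |u| ^ (-1 - α)) (Ioi r) := by
    refine IntegrableOn.congr_fun ((integrableOn_Ioi_rpow_of_lt hrlt hr).const_mul (3 * c))
      (fun u hu => ?_) measurableSet_Ioi
    rw [abs_of_pos (lt_trans hr hu)]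
  have hbndIio : IntegrableOn (fun u : ℝ => 3 * c * |u| ^ (-1 - α)) (Iio (-r)) := by
    rw [← Measure.map_neg_eq_self (volume : Measure ℝ), A.integrableOn_map_iff]
    simp_rw [Function.comp_def, abs_neg, neg_preimage, neg_Iio, neg_neg]
    exact hbndIoi
  have hIoi : IntegrableOn F (Ioi 0) := by
    rw [← Set.Ioc_union_Ioi_eq_Ioi hr.le]
    refine IntegrableOn.union ?_ ?_
    · exact (integrableOn_zero).congr_fun
        (fun u hu => (hF0 u (by linarith [hu.1]) hu.2).symm) measurableSet_Ioc
    · refine Integrable.mono hbndIoi hFm.aestronglyMeasurable.restrict ?_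
      filter_upwards [ae_restrict_mem measurableSet_Ioi] with u hu
      have hu0 : (0:ℝ) < u := lt_trans hr hu
      rw [Real.norm_eq_abs, Real.norm_eq_abs]
      refine le_trans (hFbd u hu0.ne') (le_abs_self _)
  have hIio : IntegrableOn F (Iio 0) := by
    rw [show Iio (0:ℝ) = Iio (-r) ∪ Ico (-r) 0 from
      (Set.Iio_union_Ico_eq_Iio (by linarith)).symm]
    refine IntegrableOn.union ?_ ?_
    · refine Integrable.mono hbndIio hFm.aestronglyMeasurable.restrict ?_
      filter_upwards [ae_restrict_mem measurableSet_Iio] with u hu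
      have hu0 : u < 0 := by have : u < -r := hu; linarith
      rw [Real.norm_eq_abs, Real.norm_eq_abs]
      refine le_trans (hFbd u hu0.ne) (le_abs_self _)
    · exact (integrableOn_zero).congr_fun
        (fun u hu => (hF0 u hu.1 (by linarith [hu.2])).symm) measurableSet_Ico
  have hIoiNeg : IntegrableOn (fun u => F (-u)) (Ioi 0) := by
    rw [← Measure.map_neg_eq_self (volume : Measure ℝ), A.integrableOn_map_iff]
    simp_rw [Function.comp_def, neg_neg, neg_preimage, neg_Ioi, neg_zero]
    exact hIio
  -- assemble
  have step1 : (∫ u in {(0:ℝ)}ᶜ, F u) = (∫ u in Iio (0:ℝ), F u) + ∫ u in Ioi (0:ℝ), F u := by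
    rw [← Set.Iio_union_Ioi,
      setIntegral_union ((Set.Iio_disjoint_Ici le_rfl).mono_right Set.Ioi_subset_Ici_self)
        measurableSet_Ioi hIio hIoi]
  have step2 : (∫ u in Iio (0:ℝ), F u) = ∫ u in Ioi (0:ℝ), F (-u) := by
    rw [← integral_Iic_eq_integral_Iio, ← neg_zero, ← integral_comp_neg_Ioi]
    simp
  have step3 : (∫ u in {(0:ℝ)}ᶜ, F u) = ∫ u in Ioi (0:ℝ), (F u + F (-u)) := by
    rw [step1, step2, ← integral_add hIoiNeg hIoi]
    congr 1
    ext u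
    ring
  -- symmetrized pointwise formula
  have hsym : ∀ u : ℝ, 0 < u →
      F u + F (-u) = (P (x + u) + P (x - u) - (x + 1)) * (c * u ^ (-1 - α)) := by
    intro u hu
    have habs : |u| = u := abs_of_pos hu
    have habs' : |(-u)| = u := by rw [abs_neg, habs]
    simp only [hFdef, habs, habs', hPx]
    rw [show x + -u = x - u by ring, show -(1 + α) = -1 - α by ring]
    split_ifs <;> ring
  rw [step3]
  rcases le_total 0 x with hx0 | hx0
  · -- x ≥ 0 : m = 1 - x, M = 1 + x
    have hm : (0:ℝ) < 1 - x := by linarith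
    have hmM : (1:ℝ) - x ≤ 1 + x := by linarith
    have hpt : ∀ u ∈ Ioi (0:ℝ), F u + F (-u)
        = (c / 2) * ((if u ≤ 1 - x then 0 else if u ≤ 1 + x then (1 - x) - u
            else (1 - x) - (1 + x)) * u ^ (-1 - α)) := by
      intro u hu
      have hu0 : (0:ℝ) < u := hu
      rw [hsym u hu0]
      have key : P (x + u) + P (x - u) - (x + 1)
          = (1 / 2) * (if u ≤ 1 - x then 0 else if u ≤ 1 + x then (1 - x) - u
              else (1 - x) - (1 + x)) := by
        rcases le_or_gt u (1 - x) with h | h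
        · rw [hP (x + u) (by linarith) (by linarith), hP (x - u) (by linarith) (by linarith),
            if_pos h]
          ring
        · rcases le_or_gt u (1 + x) with h' | h'
          · rw [hP1 (x + u) (by linarith), hP (x - u) (by linarith) (by linarith),
              if_neg (not_le.mpr h), if_pos h']
            ring
          · rw [hP1 (x + u) (by linarith), hP0 (x - u) (by linarith),
              if_neg (not_le.mpr h), if_neg (not_le.mpr h')]
            ring
      rw [key]; ring
    rw [setIntegral_congr_fun measurableSet_Ioi hpt, integral_const_mul,
      helper_int α hα hα1 hm hmM, div_mul_div_comm, div_mul_eq_mul_div,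
      show (2:ℝ) * (α * (1 - α)) = 2 * α * (1 - α) by ring]
  · -- x ≤ 0 : m = 1 + x, M = 1 - x
    have hm : (0:ℝ) < 1 + x := by linarith
    have hmM : (1:ℝ) + x ≤ 1 - x := by linarith
    have hpt : ∀ u ∈ Ioi (0:ℝ), F u + F (-u)
        = (-(c / 2)) * ((if u ≤ 1 + x then 0 else if u ≤ 1 - x then (1 + x) - u
            else (1 + x) - (1 - x)) * u ^ (-1 - α)) := by
      intro u hu
      have hu0 : (0:ℝ) < u := hu
      rw [hsym u hu0]
      have key : P (x + u) + P (x - u) - (x + 1)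
          = (-(1 / 2)) * (if u ≤ 1 + x then 0 else if u ≤ 1 - x then (1 + x) - u
              else (1 + x) - (1 - x)) := by
        rcases le_or_gt u (1 + x) with h | h
        · rw [hP (x + u) (by linarith) (by linarith), hP (x - u) (by linarith) (by linarith),
            if_pos h]
          ring
        · rcases le_or_gt u (1 - x) with h' | h'
          · rw [hP (x + u) (by linarith) (by linarith), hP0 (x - u) (by linarith),
              if_neg (not_le.mpr h), if_pos h']
            ring
          · rw [hP1 (x + u) (by linarith), hP0 (x - u) (by linarith),
              if_neg (not_le.mpr h), if_neg (not_le.mpr h')]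
            ring
      rw [key]; ring
    rw [setIntegral_congr_fun measurableSet_Ioi hpt, integral_const_mul,
      helper_int α hα hα1 hm hmM,
      show -(c / 2) * (((1 + x) ^ (1-α) - (1 - x) ^ (1-α)) / (α * (1 - α)))
        = c / 2 * (((1 - x) ^ (1-α) - (1 + x) ^ (1-α)) / (α * (1 - α))) by ring,
      div_mul_div_comm, div_mul_eq_mul_div,
      show (2:ℝ) * (α * (1 - α)) = 2 * α * (1 - α) by ring]

end Aux

/-- The explicit first-order corrector `p₁` for `dX = dW + ε dL^α` from `(-1,1)` to
`[1,∞)` solves `(1/2)p₁'' + g = 0` on `(-1,1)` with `p₁(-1) = 0`, `p₁(1) = 1`. -/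
theorem explicit_first_order_corrector (α c : ℝ) (hα : 0 < α) (hα2 : α < 2)
    (hα1 : α ≠ 1) (hc : 0 < c) :
    let p₀ : ℝ → ℝ := fun x => if x ≤ -1 then 0 else if x < 1 then (x + 1) / 2 else 1
    let g : ℝ → ℝ := fun x =>
      ∫ u in {(0 : ℝ)}ᶜ, (p₀ (x + u) - p₀ x - (if |u| ≤ 1 then u / 2 else 0)) *
        (c * |u| ^ (-(1 + α)))
    let p₁ : ℝ → ℝ := fun x =>
      (c / ((-α) * (1 - α) * (2 - α) * (3 - α))) *
        ((1 - x) ^ (3 - α) - 2 ^ (3 - α) + (3 - α) * 2 ^ (2 - α) * (x + 1)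
          - (1 + x) ^ (3 - α))
      - ((x + 1) / 2) * (c / ((-α) * (2 - α) * (3 - α))) * 2 ^ (3 - α)
      + (x + 1) / 2
    p₁ (-1) = 0 ∧ p₁ 1 = 1 ∧
    ∀ x ∈ Set.Ioo (-1 : ℝ) 1,
      DifferentiableAt ℝ p₁ x ∧ DifferentiableAt ℝ (deriv p₁) x ∧
      (1 / 2) * deriv (deriv p₁) x + g x = 0 := by
  intro p₀ g p₁
  have hα0 : α ≠ 0 := hα.ne'
  have h1α : (1:ℝ) - α ≠ 0 := fun h => hα1 (by linarith)
  have h2α : (2:ℝ) - α ≠ 0 := fun h => absurd h (by intro h'; linarith)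
  have h3α : (3:ℝ) - α ≠ 0 := fun h => absurd h (by intro h'; linarith)
  have hz3 : (0:ℝ) ^ ((3:ℝ) - α) = 0 := Real.zero_rpow h3α
  have h23 : (2:ℝ) ^ ((3:ℝ) - α) = 2 ^ ((2:ℝ) - α) * 2 := by
    rw [show (3:ℝ) - α = (2 - α) + 1 by ring, Real.rpow_add two_pos, Real.rpow_one]
  refine ⟨?_, ?_, ?_⟩
  · simp only [p₁]
    norm_num [hz3]
  · simp only [p₁]
    norm_num [hz3, h23]
    field_simp
    ring
  · intro x hx
    obtain ⟨hx1, hx2⟩ := hx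
    have h1x : (0:ℝ) < 1 - x := by linarith
    have h1x' : (0:ℝ) < 1 + x := by linarith
    set K : ℝ := c / ((-α) * (1 - α) * (2 - α) * (3 - α)) with hK
    set K' : ℝ := c / ((-α) * (2 - α) * (3 - α)) with hK'
    set D1 : ℝ → ℝ := fun y =>
      K * (-((3 - α) * (1 - y) ^ ((2:ℝ) - α)) + (3 - α) * 2 ^ ((2:ℝ) - α)
        - (3 - α) * (1 + y) ^ ((2:ℝ) - α)) - K' * 2 ^ ((3:ℝ) - α) / 2 + 1 / 2 with hD1def
    -- first derivative
    have hD1 : ∀ y ∈ Set.Ioo (-1:ℝ) 1, HasDerivAt p₁ (D1 y) y := by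
      intro y hy
      have hy1 : (0:ℝ) < 1 - y := by linarith [hy.2]
      have hy2 : (0:ℝ) < 1 + y := by linarith [hy.1]
      have dA : HasDerivAt (fun z : ℝ => (1 - z) ^ ((3:ℝ) - α))
          (-((3 - α) * (1 - y) ^ ((2:ℝ) - α))) y := by
        have h := ((hasDerivAt_id y).const_sub 1).rpow_const (p := 3 - α) (Or.inl hy1.ne')
        refine h.congr_deriv ?_
        rw [show (3:ℝ) - α - 1 = 2 - α by ring]
        simp only [id_eq]
        ring
      have dB : HasDerivAt (fun z : ℝ => (1 + z) ^ ((3:ℝ) - α))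
          ((3 - α) * (1 + y) ^ ((2:ℝ) - α)) y := by
        have h := ((hasDerivAt_id y).const_add 1).rpow_const (p := 3 - α) (Or.inl hy2.ne')
        refine h.congr_deriv ?_
        rw [show (3:ℝ) - α - 1 = 2 - α by ring]
        simp only [id_eq]
        ring
      have dC : HasDerivAt (fun z : ℝ => (3 - α) * 2 ^ ((2:ℝ) - α) * (z + 1))
          ((3 - α) * 2 ^ ((2:ℝ) - α)) y := by
        have h := ((hasDerivAt_id y).add_const 1).const_mul ((3 - α) * 2 ^ ((2:ℝ) - α))
        simpa using h
      have dD : HasDerivAt (fun z : ℝ => (z + 1) / 2 * K' * 2 ^ ((3:ℝ) - α))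
          (K' * 2 ^ ((3:ℝ) - α) / 2) y := by
        have h := (((hasDerivAt_id y).add_const 1).div_const 2).mul_const K'
          |>.mul_const ((2:ℝ) ^ ((3:ℝ) - α))
        exact h.congr_deriv (by ring)
      have dE : HasDerivAt (fun z : ℝ => (z + 1) / 2) (1 / 2 : ℝ) y :=
        ((hasDerivAt_id y).add_const 1).div_const 2
      have := ((((dA.sub_const ((2:ℝ) ^ ((3:ℝ) - α))).add dC).sub dB).const_mul K).sub dD
        |>.add dE
      exact this.congr_deriv (by simp only [hD1def])
    have hEq : deriv p₁ =ᶠ[nhds x] D1 :=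
      Filter.eventuallyEq_of_mem (isOpen_Ioo.mem_nhds ⟨hx1, hx2⟩)
        (fun y hy => (hD1 y hy).deriv)
    -- second derivative
    have hD2 : HasDerivAt D1
        (K * ((3 - α) * (2 - α) * (1 - x) ^ ((1:ℝ) - α)
          - (3 - α) * (2 - α) * (1 + x) ^ ((1:ℝ) - α))) x := by
      have dA : HasDerivAt (fun z : ℝ => (1 - z) ^ ((2:ℝ) - α))
          (-((2 - α) * (1 - x) ^ ((1:ℝ) - α))) x := by
        have h := ((hasDerivAt_id x).const_sub 1).rpow_const (p := 2 - α) (Or.inl h1x.ne')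
        refine h.congr_deriv ?_
        rw [show (2:ℝ) - α - 1 = 1 - α by ring]
        simp only [id_eq]
        ring
      have dB : HasDerivAt (fun z : ℝ => (1 + z) ^ ((2:ℝ) - α))
          ((2 - α) * (1 + x) ^ ((1:ℝ) - α)) x := by
        have h := ((hasDerivAt_id x).const_add 1).rpow_const (p := 2 - α) (Or.inl h1x'.ne')
        refine h.congr_deriv ?_
        rw [show (2:ℝ) - α - 1 = 1 - α by ring]
        simp only [id_eq]
        ring
      have := ((((dA.const_mul (3 - α)).neg.add_const ((3 - α) * 2 ^ ((2:ℝ) - α))).sub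
        (dB.const_mul (3 - α))).const_mul K).sub_const (K' * 2 ^ ((3:ℝ) - α) / 2)
        |>.add_const (1 / 2 : ℝ)
      exact this.congr_deriv (by ring)
    refine ⟨(hD1 x ⟨hx1, hx2⟩).differentiableAt, ?_, ?_⟩
    · rw [hEq.differentiableAt_iff]
      exact hD2.differentiableAt
    · rw [hEq.deriv_eq, hD2.deriv]
      have hg : g x = c / (2 * α * (1 - α)) * ((1 - x) ^ ((1:ℝ) - α) - (1 + x) ^ ((1:ℝ) - α)) := by
        simp only [g, p₀]
        exact g_eval α c hα hα2 hα1 hc x hx1 hx2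
      rw [hg, hK]
      field_simp
      ring
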